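/- arXiv:1108.4358 — 2 statements merged into one kernel-verified Lean document; each statement's English description precedes it below -/
import Mathlib

section
/- The Lagrangian subproblem Z_LD(λ) decomposes: Z_LD(λ) equals the optimal value of a maximum-weight bipartite matching problem between V_1 and V_2 where the weight of matching i to k is c_{ik} + v_{ik}(λ), and each v_{ik}(λ) is itself the optimal value of a maximum-weight bipartite matching problem between V_1∖{i} and V_2∖{k} with modified weights (w_{ikjl} + λ_{ikjl} if j > i, and w_{ikjl} − λ_{jlik} if j < i). -/
open Finset

/-- Feasibility for the Lagrangian subproblem: `x` is a binary partial matching and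
the binary variables `y` satisfy the lifted constraints. -/
def Feas (n1 n2 : ℕ) (x : Fin n1 → Fin n2 → ℝ)
    (y : Fin n1 → Fin n2 → Fin n1 → Fin n2 → ℝ) : Prop :=
  (∀ i k, x i k = 0 ∨ x i k = 1) ∧
  (∀ i k j l, y i k j l = 0 ∨ y i k j l = 1) ∧
  (∀ j, ∑ l, x j l ≤ 1) ∧
  (∀ l, ∑ j, x j l ≤ 1) ∧
  (∀ i j k, i ≠ j → ∑ l ∈ Finset.univ.erase k, y i k j l ≤ x i k) ∧
  (∀ i k l, k ≠ l → ∑ j ∈ Finset.univ.erase i, y i k j l ≤ x i k)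

/-- The Lagrangian objective (with split, symmetric interaction weights `w` and
multipliers `lam` dualizing the linking constraints `y i k j l = y j l i k`). -/
def lagObj (n1 n2 : ℕ) (c : Fin n1 → Fin n2 → ℝ)
    (w lam : Fin n1 → Fin n2 → Fin n1 → Fin n2 → ℝ)
    (x : Fin n1 → Fin n2 → ℝ)
    (y : Fin n1 → Fin n2 → Fin n1 → Fin n2 → ℝ) : ℝ :=
  (∑ i, ∑ k, c i k * x i k) +
  (∑ i, ∑ j, ∑ k, ∑ l,
    if i < j ∧ k ≠ l then (w i k j l + lam i k j l) * y i k j l else 0) +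
  (∑ i, ∑ j, ∑ k, ∑ l,
    if j < i ∧ k ≠ l then (w i k j l - lam j l i k) * y i k j l else 0)

/-- The Lagrangian dual value `Z_LD(λ)`. -/
noncomputable def ZLD (n1 n2 : ℕ) (c : Fin n1 → Fin n2 → ℝ)
    (w lam : Fin n1 → Fin n2 → Fin n1 → Fin n2 → ℝ) : ℝ :=
  sSup {v : ℝ | ∃ x y, Feas n1 n2 x y ∧ v = lagObj n1 n2 c w lam x y}

/-- An alignment: a partial injective function from `Fin n1` to `Fin n2`. -/
def PartialInj (n1 n2 : ℕ) (a : Fin n1 → Option (Fin n2)) : Prop :=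
  ∀ i j k, a i = some k → a j = some k → i = j

/-- The additive alignment score (with split, symmetric interaction weights `w`,
summed over both orders of each pair). -/
def alnScore (n1 n2 : ℕ) (c : Fin n1 → Fin n2 → ℝ)
    (w : Fin n1 → Fin n2 → Fin n1 → Fin n2 → ℝ)
    (a : Fin n1 → Option (Fin n2)) : ℝ :=
  (∑ i, (a i).elim 0 (fun k => c i k)) +
  (∑ i, ∑ j, if i ≠ j then
    (a i).elim 0 (fun k => (a j).elim 0 (fun l => w i k j l)) else 0)

/-- The local subproblem `v_{ik}(λ)`: a maximum-weight bipartite matching between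
`V1 ∖ {i}` and `V2 ∖ {k}` with weights `w i k j l + λ i k j l` for `j > i` and
`w i k j l - λ j l i k` for `j < i`. -/
noncomputable def vik (n1 n2 : ℕ)
    (w lam : Fin n1 → Fin n2 → Fin n1 → Fin n2 → ℝ)
    (i : Fin n1) (k : Fin n2) : ℝ :=
  sSup {v : ℝ | ∃ y : Fin n1 → Fin n2 → ℝ,
    (∀ j l, y j l = 0 ∨ y j l = 1) ∧
    (∀ l, y i l = 0) ∧ (∀ j, y j k = 0) ∧
    (∀ j, ∑ l, y j l ≤ 1) ∧
    (∀ l, ∑ j, y j l ≤ 1) ∧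
    v = (∑ j, ∑ l, if i < j ∧ l ≠ k then (w i k j l + lam i k j l) * y j l else 0)
      + (∑ j, ∑ l, if j < i ∧ l ≠ k then (w i k j l - lam j l i k) * y j l else 0)}

namespace ZLDaux

lemma bin_nonneg {a : ℝ} (h : a = 0 ∨ a = 1) : 0 ≤ a := by rcases h with h|h <;> simp [h]
lemma bin_le_one {a : ℝ} (h : a = 0 ∨ a = 1) : a ≤ 1 := by rcases h with h|h <;> simp [h]

lemma finite_bin2 (n1 n2 : ℕ) :
    {y : Fin n1 → Fin n2 → ℝ | ∀ j l, y j l = 0 ∨ y j l = 1}.Finite := by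
  classical
  refine Set.Finite.subset (Set.finite_range
    (fun (b : Fin n1 → Fin n2 → Bool) (j : Fin n1) (l : Fin n2) =>
      if b j l then (1:ℝ) else 0)) ?_
  rintro y hy
  refine ⟨fun j l => if y j l = 1 then true else false, ?_⟩
  funext j l
  rcases hy j l with h | h <;> simp [h]

lemma finite_bin4 (n1 n2 : ℕ) :
    {y : Fin n1 → Fin n2 → Fin n1 → Fin n2 → ℝ |
      ∀ i k j l, y i k j l = 0 ∨ y i k j l = 1}.Finite := by
  classical
  refine Set.Finite.subset (Set.finite_range
    (fun (b : Fin n1 → Fin n2 → Fin n1 → Fin n2 → Bool) i k j l =>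
      if b i k j l then (1:ℝ) else 0)) ?_
  rintro y hy
  refine ⟨fun i k j l => if y i k j l = 1 then true else false, ?_⟩
  funext i k j l
  rcases hy i k j l with h | h <;> simp [h]

/-- local objective -/
def Fik (n1 n2 : ℕ) (w lam : Fin n1 → Fin n2 → Fin n1 → Fin n2 → ℝ)
    (i : Fin n1) (k : Fin n2) (y : Fin n1 → Fin n2 → ℝ) : ℝ :=
  (∑ j, ∑ l, if i < j ∧ l ≠ k then (w i k j l + lam i k j l) * y j l else 0)
  + (∑ j, ∑ l, if j < i ∧ l ≠ k then (w i k j l - lam j l i k) * y j l else 0)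

def vikSet (n1 n2 : ℕ) (w lam : Fin n1 → Fin n2 → Fin n1 → Fin n2 → ℝ)
    (i : Fin n1) (k : Fin n2) : Set ℝ :=
  {v : ℝ | ∃ y : Fin n1 → Fin n2 → ℝ,
    (∀ j l, y j l = 0 ∨ y j l = 1) ∧
    (∀ l, y i l = 0) ∧ (∀ j, y j k = 0) ∧
    (∀ j, ∑ l, y j l ≤ 1) ∧
    (∀ l, ∑ j, y j l ≤ 1) ∧
    v = Fik n1 n2 w lam i k y}

lemma vik_def (n1 n2 : ℕ) (w lam : Fin n1 → Fin n2 → Fin n1 → Fin n2 → ℝ)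
    (i : Fin n1) (k : Fin n2) :
    vik n1 n2 w lam i k = sSup (vikSet n1 n2 w lam i k) := rfl

lemma vikSet_finite (n1 n2 : ℕ) (w lam : Fin n1 → Fin n2 → Fin n1 → Fin n2 → ℝ)
    (i : Fin n1) (k : Fin n2) : (vikSet n1 n2 w lam i k).Finite := by
  refine Set.Finite.subset ((finite_bin2 n1 n2).image (Fik n1 n2 w lam i k)) ?_
  rintro v ⟨y, h1, -, -, -, -, rfl⟩
  exact ⟨y, h1, rfl⟩

lemma zero_mem_vikSet (n1 n2 : ℕ) (w lam : Fin n1 → Fin n2 → Fin n1 → Fin n2 → ℝ)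
    (i : Fin n1) (k : Fin n2) : (0:ℝ) ∈ vikSet n1 n2 w lam i k :=
  ⟨fun _ _ => 0, by simp [Fik]⟩

lemma vik_nonneg (n1 n2 : ℕ) (w lam : Fin n1 → Fin n2 → Fin n1 → Fin n2 → ℝ)
    (i : Fin n1) (k : Fin n2) : 0 ≤ vik n1 n2 w lam i k :=
  le_csSup (vikSet_finite n1 n2 w lam i k).bddAbove (zero_mem_vikSet n1 n2 w lam i k)

lemma vik_mem (n1 n2 : ℕ) (w lam : Fin n1 → Fin n2 → Fin n1 → Fin n2 → ℝ)
    (i : Fin n1) (k : Fin n2) : vik n1 n2 w lam i k ∈ vikSet n1 n2 w lam i k :=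
  Set.Nonempty.csSup_mem ⟨0, zero_mem_vikSet n1 n2 w lam i k⟩ (vikSet_finite n1 n2 w lam i k)

lemma lagObj_eq (n1 n2 : ℕ) (c : Fin n1 → Fin n2 → ℝ)
    (w lam : Fin n1 → Fin n2 → Fin n1 → Fin n2 → ℝ)
    (x : Fin n1 → Fin n2 → ℝ)
    (y : Fin n1 → Fin n2 → Fin n1 → Fin n2 → ℝ) :
    lagObj n1 n2 c w lam x y =
      (∑ i, ∑ k, c i k * x i k) +
      ∑ i, ∑ k, Fik n1 n2 w lam i k (fun j l => y i k j l) := by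
  rw [lagObj, add_assoc]
  congr 1
  have h1 : (∑ i, ∑ j, ∑ k, ∑ l,
      if i < j ∧ k ≠ l then (w i k j l + lam i k j l) * y i k j l else 0)
      = ∑ i, ∑ k, ∑ j, ∑ l,
        if i < j ∧ l ≠ k then (w i k j l + lam i k j l) * y i k j l else 0 := by
    refine Finset.sum_congr rfl fun i _ => ?_
    rw [Finset.sum_comm]
    exact Finset.sum_congr rfl fun k _ => Finset.sum_congr rfl fun j _ =>
      Finset.sum_congr rfl fun l _ => if_congr (and_congr_right' ne_comm) rfl rfl
  have h2 : (∑ i, ∑ j, ∑ k, ∑ l,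
      if j < i ∧ k ≠ l then (w i k j l - lam j l i k) * y i k j l else 0)
      = ∑ i, ∑ k, ∑ j, ∑ l,
        if j < i ∧ l ≠ k then (w i k j l - lam j l i k) * y i k j l else 0 := by
    refine Finset.sum_congr rfl fun i _ => ?_
    rw [Finset.sum_comm]
    exact Finset.sum_congr rfl fun k _ => Finset.sum_congr rfl fun j _ =>
      Finset.sum_congr rfl fun l _ => if_congr (and_congr_right' ne_comm) rfl rfl
  rw [h1, h2, ← Finset.sum_add_distrib]
  refine Finset.sum_congr rfl fun i _ => ?_
  rw [← Finset.sum_add_distrib]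
  rfl

lemma Fik_smul (n1 n2 : ℕ) (w lam : Fin n1 → Fin n2 → Fin n1 → Fin n2 → ℝ)
    (i : Fin n1) (k : Fin n2) (t : ℝ) (y : Fin n1 → Fin n2 → ℝ) :
    Fik n1 n2 w lam i k (fun j l => t * y j l) = t * Fik n1 n2 w lam i k y := by
  simp only [Fik, mul_add, Finset.mul_sum]
  congr 1 <;>
    exact Finset.sum_congr rfl fun j _ => Finset.sum_congr rfl fun l _ => by
      split_ifs <;> ring

lemma Fik_slice_le (n1 n2 : ℕ) (w lam : Fin n1 → Fin n2 → Fin n1 → Fin n2 → ℝ)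
    (x : Fin n1 → Fin n2 → ℝ) (y : Fin n1 → Fin n2 → Fin n1 → Fin n2 → ℝ)
    (hx : ∀ i k, x i k = 0 ∨ x i k = 1)
    (hy : ∀ i k j l, y i k j l = 0 ∨ y i k j l = 1)
    (h5 : ∀ i j k, i ≠ j → ∑ l ∈ Finset.univ.erase k, y i k j l ≤ x i k)
    (h6 : ∀ i k l, k ≠ l → ∑ j ∈ Finset.univ.erase i, y i k j l ≤ x i k)
    (i : Fin n1) (k : Fin n2) :
    Fik n1 n2 w lam i k (fun j l => y i k j l) ≤ vik n1 n2 w lam i k * x i k := by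
  rcases hx i k with h0 | h1
  · rw [h0, mul_zero]
    have hz : ∀ j l, j ≠ i → l ≠ k → y i k j l = 0 := by
      intro j l hj hl
      have hs := h6 i k l (Ne.symm hl)
      rw [h0] at hs
      have hnn : ∀ j' ∈ Finset.univ.erase i, 0 ≤ y i k j' l :=
        fun j' _ => bin_nonneg (hy i k j' l)
      exact (Finset.sum_eq_zero_iff_of_nonneg hnn).1
        (le_antisymm hs (Finset.sum_nonneg hnn)) j (by simp [hj])
    have e1 : (∑ j, ∑ l, if i < j ∧ l ≠ k then (w i k j l + lam i k j l) * y i k j l else 0) = 0 := by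
      refine Finset.sum_eq_zero fun j _ => Finset.sum_eq_zero fun l _ => ?_
      split_ifs with h
      · rw [hz j l h.1.ne' h.2, mul_zero]
      · rfl
    have e2 : (∑ j, ∑ l, if j < i ∧ l ≠ k then (w i k j l - lam j l i k) * y i k j l else 0) = 0 := by
      refine Finset.sum_eq_zero fun j _ => Finset.sum_eq_zero fun l _ => ?_
      split_ifs with h
      · rw [hz j l h.1.ne h.2, mul_zero]
      · rfl
    simp only [Fik]
    rw [e1, e2, add_zero]
  · rw [h1, mul_one]
    set y' : Fin n1 → Fin n2 → ℝ := fun j l => if j = i ∨ l = k then 0 else y i k j l with hy'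
    have hmem : Fik n1 n2 w lam i k y' ∈ vikSet n1 n2 w lam i k := by
      refine ⟨y', ?_, ?_, ?_, ?_, ?_, rfl⟩
      · intro j l
        by_cases h : j = i ∨ l = k
        · simp [y', h]
        · simpa [y', h] using hy i k j l
      · intro l; simp [y']
      · intro j; simp [y']
      · intro j
        by_cases hj : j = i
        · simp [y', hj]
        · calc ∑ l, y' j l
              = ∑ l ∈ Finset.univ.erase k, y' j l + y' j k :=
                (Finset.sum_erase_add _ _ (Finset.mem_univ k)).symm
            _ = ∑ l ∈ Finset.univ.erase k, y i k j l := by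
                rw [show y' j k = 0 by simp [y'], add_zero]
                exact Finset.sum_congr rfl fun l hl => by
                  simp [y', hj, Finset.ne_of_mem_erase hl]
            _ ≤ x i k := h5 i j k (Ne.symm hj)
            _ = 1 := h1
      · intro l
        by_cases hl : l = k
        · simp [y', hl]
        · calc ∑ j, y' j l
              = ∑ j ∈ Finset.univ.erase i, y' j l + y' i l :=
                (Finset.sum_erase_add _ _ (Finset.mem_univ i)).symm
            _ = ∑ j ∈ Finset.univ.erase i, y i k j l := by
                rw [show y' i l = 0 by simp [y'], add_zero]
                exact Finset.sum_congr rfl fun j hj => by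
                  simp [y', hl, Finset.ne_of_mem_erase hj]
            _ ≤ x i k := h6 i k l (Ne.symm hl)
            _ = 1 := h1
    have heq : Fik n1 n2 w lam i k (fun j l => y i k j l) = Fik n1 n2 w lam i k y' := by
      simp only [Fik]
      congr 1
      · refine Finset.sum_congr rfl fun j _ => Finset.sum_congr rfl fun l _ => ?_
        split_ifs with h
        · rw [show y' j l = y i k j l from by simp [y', h.1.ne', h.2]]
        · rfl
      · refine Finset.sum_congr rfl fun j _ => Finset.sum_congr rfl fun l _ => ?_
        split_ifs with h
        · rw [show y' j l = y i k j l from by simp [y', h.1.ne, h.2]]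
        · rfl
    rw [heq, vik_def]
    exact le_csSup (vikSet_finite n1 n2 w lam i k).bddAbove hmem


def ZLDSet (n1 n2 : ℕ) (c : Fin n1 → Fin n2 → ℝ)
    (w lam : Fin n1 → Fin n2 → Fin n1 → Fin n2 → ℝ) : Set ℝ :=
  {v : ℝ | ∃ x y, Feas n1 n2 x y ∧ v = lagObj n1 n2 c w lam x y}

def RHSSet (n1 n2 : ℕ) (c : Fin n1 → Fin n2 → ℝ)
    (w lam : Fin n1 → Fin n2 → Fin n1 → Fin n2 → ℝ) : Set ℝ :=
  {v : ℝ | ∃ x : Fin n1 → Fin n2 → ℝ,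
    (∀ i k, x i k = 0 ∨ x i k = 1) ∧
    (∀ j, ∑ l, x j l ≤ 1) ∧
    (∀ l, ∑ j, x j l ≤ 1) ∧
    v = ∑ i, ∑ k, (c i k + vik n1 n2 w lam i k) * x i k}

lemma ZLDSet_finite (n1 n2 : ℕ) (c : Fin n1 → Fin n2 → ℝ)
    (w lam : Fin n1 → Fin n2 → Fin n1 → Fin n2 → ℝ) :
    (ZLDSet n1 n2 c w lam).Finite := by
  refine Set.Finite.subset (((finite_bin2 n1 n2).prod (finite_bin4 n1 n2)).image
    (fun p => lagObj n1 n2 c w lam p.1 p.2)) ?_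
  rintro v ⟨x, y, ⟨hx, hy, -, -, -, -⟩, rfl⟩
  exact ⟨(x, y), ⟨hx, hy⟩, rfl⟩

lemma RHSSet_finite (n1 n2 : ℕ) (c : Fin n1 → Fin n2 → ℝ)
    (w lam : Fin n1 → Fin n2 → Fin n1 → Fin n2 → ℝ) :
    (RHSSet n1 n2 c w lam).Finite := by
  refine Set.Finite.subset ((finite_bin2 n1 n2).image
    (fun x => ∑ i, ∑ k, (c i k + vik n1 n2 w lam i k) * x i k)) ?_
  rintro v ⟨x, hx, -, -, rfl⟩
  exact ⟨x, hx, rfl⟩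

lemma zero_mem_ZLDSet (n1 n2 : ℕ) (c : Fin n1 → Fin n2 → ℝ)
    (w lam : Fin n1 → Fin n2 → Fin n1 → Fin n2 → ℝ) :
    (0:ℝ) ∈ ZLDSet n1 n2 c w lam := by
  refine ⟨fun _ _ => 0, fun _ _ _ _ => 0,
    ⟨fun _ _ => Or.inl rfl, fun _ _ _ _ => Or.inl rfl, ?_, ?_, ?_, ?_⟩, ?_⟩ <;>
    simp [lagObj]

lemma zero_mem_RHSSet (n1 n2 : ℕ) (c : Fin n1 → Fin n2 → ℝ)
    (w lam : Fin n1 → Fin n2 → Fin n1 → Fin n2 → ℝ) :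
    (0:ℝ) ∈ RHSSet n1 n2 c w lam :=
  ⟨fun _ _ => 0, fun _ _ => Or.inl rfl, by simp, by simp, by simp⟩

end ZLDaux

open ZLDaux in
/-- The Lagrangian subproblem decomposes: `Z_LD(λ)` is the optimal value of a
maximum-weight bipartite matching between `V1` and `V2` in which matching `i` to
`k` has weight `c i k + v_{ik}(λ)`. -/
theorem ZLD_decomposition (n1 n2 : ℕ) (c : Fin n1 → Fin n2 → ℝ)
    (w lam : Fin n1 → Fin n2 → Fin n1 → Fin n2 → ℝ) :
    ZLD n1 n2 c w lam =
      sSup {v : ℝ | ∃ x : Fin n1 → Fin n2 → ℝ,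
        (∀ i k, x i k = 0 ∨ x i k = 1) ∧
        (∀ j, ∑ l, x j l ≤ 1) ∧
        (∀ l, ∑ j, x j l ≤ 1) ∧
        v = ∑ i, ∑ k, (c i k + vik n1 n2 w lam i k) * x i k} := by
  classical
  show sSup (ZLDSet n1 n2 c w lam) = sSup (RHSSet n1 n2 c w lam)
  apply le_antisymm
  · -- ZLD ≤ RHS
    refine csSup_le ⟨0, zero_mem_ZLDSet n1 n2 c w lam⟩ ?_
    rintro v ⟨x, y, ⟨hx, hy, h3, h4, h5, h6⟩, rfl⟩
    have key : lagObj n1 n2 c w lam x y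
        ≤ ∑ i, ∑ k, (c i k + vik n1 n2 w lam i k) * x i k := by
      rw [lagObj_eq]
      have hb : (∑ i, ∑ k, Fik n1 n2 w lam i k (fun j l => y i k j l))
          ≤ ∑ i, ∑ k, vik n1 n2 w lam i k * x i k :=
        Finset.sum_le_sum fun i _ => Finset.sum_le_sum fun k _ =>
          Fik_slice_le n1 n2 w lam x y hx hy h5 h6 i k
      calc (∑ i, ∑ k, c i k * x i k)
            + ∑ i, ∑ k, Fik n1 n2 w lam i k (fun j l => y i k j l)
          ≤ (∑ i, ∑ k, c i k * x i k)
            + ∑ i, ∑ k, vik n1 n2 w lam i k * x i k := add_le_add_right hb _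
        _ = ∑ i, ∑ k, (c i k + vik n1 n2 w lam i k) * x i k := by
            rw [← Finset.sum_add_distrib]
            refine Finset.sum_congr rfl fun i _ => ?_
            rw [← Finset.sum_add_distrib]
            exact Finset.sum_congr rfl fun k _ => by ring
    exact key.trans (le_csSup (RHSSet_finite n1 n2 c w lam).bddAbove ⟨x, hx, h3, h4, rfl⟩)
  · -- RHS ≤ ZLD
    refine csSup_le ⟨0, zero_mem_RHSSet n1 n2 c w lam⟩ ?_
    rintro v ⟨x, hx, h3, h4, rfl⟩
    have hch : ∀ i k, ∃ y : Fin n1 → Fin n2 → ℝ,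
        (∀ j l, y j l = 0 ∨ y j l = 1) ∧
        (∀ l, y i l = 0) ∧ (∀ j, y j k = 0) ∧
        (∀ j, ∑ l, y j l ≤ 1) ∧
        (∀ l, ∑ j, y j l ≤ 1) ∧
        vik n1 n2 w lam i k = Fik n1 n2 w lam i k y :=
      fun i k => vik_mem n1 n2 w lam i k
    choose Y hY1 hY2 hY3 hY4 hY5 hY6 using hch
    set Yb : Fin n1 → Fin n2 → Fin n1 → Fin n2 → ℝ :=
      fun i k j l => x i k * Y i k j l with hYbdef
    have hfeas : Feas n1 n2 x Yb := by
      refine ⟨hx, ?_, h3, h4, ?_, ?_⟩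
      · intro i k j l
        rcases hx i k with h | h <;> rcases hY1 i k j l with h' | h' <;>
          simp [Yb, h, h']
      · intro i j k hij
        have hs : ∑ l ∈ Finset.univ.erase k, Y i k j l ≤ 1 :=
          le_trans (Finset.sum_le_sum_of_subset_of_nonneg (Finset.subset_univ _)
            (fun l _ _ => bin_nonneg (hY1 i k j l))) (hY4 i k j)
        calc ∑ l ∈ Finset.univ.erase k, Yb i k j l
            = x i k * ∑ l ∈ Finset.univ.erase k, Y i k j l := by
              rw [Finset.mul_sum]
          _ ≤ x i k := mul_le_of_le_one_right (bin_nonneg (hx i k)) hs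
      · intro i k l hkl
        have hs : ∑ j ∈ Finset.univ.erase i, Y i k j l ≤ 1 :=
          le_trans (Finset.sum_le_sum_of_subset_of_nonneg (Finset.subset_univ _)
            (fun j _ _ => bin_nonneg (hY1 i k j l))) (hY5 i k l)
        calc ∑ j ∈ Finset.univ.erase i, Yb i k j l
            = x i k * ∑ j ∈ Finset.univ.erase i, Y i k j l := by
              rw [Finset.mul_sum]
          _ ≤ x i k := mul_le_of_le_one_right (bin_nonneg (hx i k)) hs
    have hterm : ∀ (i : Fin n1) (k : Fin n2),
        Fik n1 n2 w lam i k (fun j l => Yb i k j l)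
          = x i k * vik n1 n2 w lam i k := by
      intro i k
      show Fik n1 n2 w lam i k (fun j l => x i k * Y i k j l)
        = x i k * vik n1 n2 w lam i k
      rw [Fik_smul, ← hY6 i k]
    have hval : lagObj n1 n2 c w lam x Yb
        = ∑ i, ∑ k, (c i k + vik n1 n2 w lam i k) * x i k := by
      rw [lagObj_eq]
      have h2 : (∑ i, ∑ k, Fik n1 n2 w lam i k (fun j l => Yb i k j l))
          = ∑ i, ∑ k, x i k * vik n1 n2 w lam i k :=
        Finset.sum_congr rfl fun i _ => Finset.sum_congr rfl fun k _ => hterm i k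
      rw [h2, ← Finset.sum_add_distrib]
      refine Finset.sum_congr rfl fun i _ => ?_
      rw [← Finset.sum_add_distrib]
      exact Finset.sum_congr rfl fun k _ => by ring
    exact le_csSup (ZLDSet_finite n1 n2 c w lam).bddAbove ⟨x, Yb, hfeas, hval.symm⟩
end

section
/- If a : V(K_k) ⇀ V(G) is a partial injective function with edge-correctness score s(a) = k(k−1)/2 (all edges of the complete graph K_k conserved), then a is total and its image is a clique of size k in G. -/
lemma card_lt_pairs (k : ℕ) :
    Nat.card {p : Fin k × Fin k // p.1 < p.2} = k * (k - 1) / 2 := by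
  have e : {p : Fin k × Fin k // p.1 < p.2} ≃ Σ j : Fin k, {i : Fin k // i < j} :=
    ((Equiv.prodComm (Fin k) (Fin k)).subtypeEquiv (by simp)).trans
      (Equiv.subtypeProdEquivSigmaSubtype fun j i => i < j)
  rw [Nat.card_eq_fintype_card, Fintype.card_congr e, Fintype.card_sigma]
  have h : ∀ j : Fin k, Fintype.card {i : Fin k // i < j} = (j : ℕ) := fun j => by
    rw [Fintype.card_subtype, Finset.filter_gt_eq_Iio, Fin.card_Iio]
  simp_rw [h]
  rw [Fin.sum_univ_eq_sum_range (fun i => i) k, Finset.sum_range_id]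

/-- If an alignment of the complete graph `K_k` with `G` conserves all
`k(k-1)/2` edges, then it is total and its image is a clique of size `k` in `G`. -/
theorem full_score_gives_clique {V : Type*} (G : SimpleGraph V)
    (k : ℕ) (hk : 2 ≤ k)
    (a : Fin k → Option V)
    (hinj : ∀ i j v, a i = some v → a j = some v → i = j)
    (hscore : Nat.card {p : Fin k × Fin k //
        p.1 < p.2 ∧ ∃ v w, a p.1 = some v ∧ a p.2 = some w ∧ G.Adj v w}
      = k * (k - 1) / 2) :
    (∀ i, (a i).isSome) ∧
    G.IsClique {v | ∃ i, a i = some v} ∧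
    {v | ∃ i, a i = some v}.ncard = k := by
  classical
  set P : Fin k × Fin k → Prop := fun p =>
    p.1 < p.2 ∧ ∃ v w, a p.1 = some v ∧ a p.2 = some w ∧ G.Adj v w with hP
  -- the inclusion of scored pairs into all ordered pairs is bijective
  have key : ∀ i j : Fin k, i < j →
      ∃ v w, a i = some v ∧ a j = some w ∧ G.Adj v w := by
    intro i j hij
    let f : {p : Fin k × Fin k // P p} → {p : Fin k × Fin k // p.1 < p.2} :=
      fun x => ⟨x.1, x.2.1⟩
    have hfinj : Function.Injective f := by
      intro x y hxy
      simp only [f, Subtype.mk.injEq] at hxy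
      exact Subtype.ext hxy
    have hbij : Function.Bijective f :=
      (Nat.bijective_iff_injective_and_card f).mpr
        ⟨hfinj, by rw [hscore, card_lt_pairs]⟩
    obtain ⟨x, hx⟩ := hbij.2 ⟨(i, j), hij⟩
    have := x.2.2
    rwa [show x.1 = (i, j) from congrArg Subtype.val hx] at this
  -- totality
  have htot : ∀ i, (a i).isSome := by
    intro i
    rcases lt_or_ge (i : ℕ) (k - 1) with h | h
    · have hlt : i < (⟨k - 1, by omega⟩ : Fin k) := h
      obtain ⟨v, w, hv, hw, hadj⟩ := key i _ hlt
      simp [hv]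
    · have h0 : (⟨0, by omega⟩ : Fin k) < i := by
        have := i.isLt
        exact Fin.mk_lt_of_lt_val (by omega)
      obtain ⟨v, w, hv, hw, hadj⟩ := key _ i h0
      simp [hw]
  refine ⟨htot, ?_, ?_⟩
  · -- clique
    intro v hv w hw hvw
    obtain ⟨i, hi⟩ := hv
    obtain ⟨j, hj⟩ := hw
    have hne : i ≠ j := fun h => hvw (by rw [h] at hi; rw [hi] at hj; exact Option.some.inj hj)
    rcases hne.lt_or_gt with h | h
    · obtain ⟨v', w', hv', hw', hadj⟩ := key i j h
      rw [hi] at hv'; rw [hj] at hw'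
      obtain rfl := Option.some.inj hv'
      obtain rfl := Option.some.inj hw'
      exact hadj
    · obtain ⟨v', w', hv', hw', hadj⟩ := key j i h
      rw [hj] at hv'; rw [hi] at hw'
      obtain rfl := Option.some.inj hv'
      obtain rfl := Option.some.inj hw'
      exact hadj.symm
  · -- cardinality
    set f : Fin k → V := fun i => (a i).get (htot i) with hf
    have himg : {v | ∃ i, a i = some v} = Set.range f := by
      ext v
      constructor
      · rintro ⟨i, hi⟩
        exact ⟨i, by simp [hf, hi]⟩
      · rintro ⟨i, rfl⟩
        exact ⟨i, by simp [hf]⟩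
    have hfinj : Function.Injective f := by
      intro i j hij
      apply hinj i j (f i)
      · simp [hf]
      · rw [hij]; simp [hf]
    rw [himg, ← Set.image_univ, Set.ncard_image_of_injective _ hfinj, Set.ncard_univ,
      Nat.card_eq_fintype_card, Fintype.card_fin]
end
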